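/- Let X be a topological vector space and T : X → φ a surjective continuous linear operator, where φ is the countable direct sum of one-dimensional spaces (countable-dimensional space with the strongest locally convex topology, in which every linear map out of φ into any topological vector space is continuous). Then X is topologically isomorphic to φ × ker T. -/

import Mathlib

/-- If T : X → φ is a surjective continuous linear operator onto φ (a countable
dimensional space with the property that every linear map out of it into any
topological vector space is continuous), then X ≅ φ × ker T topologically. -/
theorem stmt_7 {𝕜 : Type} [RCLike 𝕜] {X Φ : Type}
    [AddCommGroup X] [Module 𝕜 X] [TopologicalSpace X] [IsTopologicalAddGroup X]
    [ContinuousSMul 𝕜 X]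
    [AddCommGroup Φ] [Module 𝕜 Φ] [TopologicalSpace Φ] [IsTopologicalAddGroup Φ]
    [ContinuousSMul 𝕜 Φ]
    (hrank : Module.rank 𝕜 Φ = Cardinal.aleph0)
    (hΦ : ∀ (W : Type) [AddCommGroup W] [Module 𝕜 W] [TopologicalSpace W]
      [IsTopologicalAddGroup W] [ContinuousSMul 𝕜 W] (f : Φ →ₗ[𝕜] W), Continuous f)
    (T : X →L[𝕜] Φ) (hT : Function.Surjective T) :
    Nonempty (X ≃L[𝕜] (Φ × LinearMap.ker (T : X →ₗ[𝕜] Φ))) := by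
  obtain ⟨S, hS⟩ := (T : X →ₗ[𝕜] Φ).exists_rightInverse_of_surjective
    (LinearMap.range_eq_top.2 hT)
  have hS' : ∀ φ, T (S φ) = φ := fun φ => LinearMap.ext_iff.1 hS φ
  have hScont : Continuous S := hΦ X S
  set P : X →ₗ[𝕜] X := LinearMap.id - S.comp (T : X →ₗ[𝕜] Φ) with hPdef
  have hP : ∀ x, P x ∈ LinearMap.ker (T : X →ₗ[𝕜] Φ) := by
    intro x
    simp [hPdef, LinearMap.mem_ker, hS', map_sub]
  let f : X →ₗ[𝕜] Φ × LinearMap.ker (T : X →ₗ[𝕜] Φ) :=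
    (T : X →ₗ[𝕜] Φ).prod (P.codRestrict (LinearMap.ker (T : X →ₗ[𝕜] Φ)) hP)
  let g : Φ × LinearMap.ker (T : X →ₗ[𝕜] Φ) →ₗ[𝕜] X :=
    S.comp (LinearMap.fst 𝕜 Φ (LinearMap.ker (T : X →ₗ[𝕜] Φ))) +
      (LinearMap.ker (T : X →ₗ[𝕜] Φ)).subtype.comp (LinearMap.snd 𝕜 Φ (LinearMap.ker (T : X →ₗ[𝕜] Φ)))
  have hfg : f.comp g = LinearMap.id := by
    apply LinearMap.ext
    rintro ⟨φ, k, hk⟩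
    have hk' : T k = 0 := hk
    refine Prod.ext ?_ (Subtype.ext ?_)
    · simp [f, g, hS', hk']
    · simp [f, g, hPdef, hS', hk']
  have hgf : g.comp f = LinearMap.id := by
    apply LinearMap.ext
    intro x
    simp [f, g, hPdef]
  let e : X ≃ₗ[𝕜] Φ × LinearMap.ker (T : X →ₗ[𝕜] Φ) := LinearEquiv.ofLinear f g hfg hgf
  have hfc : Continuous f := by
    refine Continuous.prodMk T.continuous (Continuous.subtype_mk ?_ _)
    show Continuous fun x => P x
    have : (fun x => P x) = fun x : X => x - S (T x) := by
      funext x; simp [hPdef]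
    rw [this]
    exact continuous_id.sub (hScont.comp T.continuous)
  have hgc : Continuous g := by
    show Continuous fun p => g p
    have : (fun p => g p) = fun p : Φ × LinearMap.ker (T : X →ₗ[𝕜] Φ) => S p.1 + (p.2 : X) := by
      funext p; simp [g]
    rw [this]
    exact (hScont.comp continuous_fst).add (continuous_subtype_val.comp continuous_snd)
  exact ⟨{ e with continuous_toFun := hfc, continuous_invFun := hgc }⟩
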